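/- In the setting of a step θ : L F ⇒ G L over an adjunction L ⊣ R: if b : B → F B is a recursive F-coalgebra, then L̄(b) := θ_B ∘ L b : L B → G L B is a recursive G-coalgebra; dually, if a : G A → A is a corecursive G-algebra, then R̄(a) := R a ∘ θ♭_A : F R A → R A is a corecursive F-algebra. -/
import Mathlib


open CategoryTheory

lemma key {C D : Type*} [Category C] [Category D]
    (L : C ⥤ D) (R : D ⥤ C) (adj : L ⊣ R)
    (F : C ⥤ C) (G : D ⥤ D)
    (θ : F ⋙ L ⟶ L ⋙ G) (θb : R ⋙ F ⟶ G ⋙ R)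
    (hθb : ∀ A : D, θb.app A =
      adj.unit.app (F.obj (R.obj A)) ≫ R.map (θ.app (R.obj A)) ≫
        R.map (G.map (adj.counit.app A)))
    {B : C} {A' : D} (b : B ⟶ F.obj B) (a' : G.obj A' ⟶ A') (f : L.obj B ⟶ A') :
    (adj.homEquiv B A') ((L.map b ≫ θ.app B) ≫ G.map f ≫ a') =
      b ≫ F.map ((adj.homEquiv B A') f) ≫ (θb.app A' ≫ R.map a') := by
  simp only [Adjunction.homEquiv_unit, hθb, Functor.comp_obj, Functor.map_comp, Category.assoc]
  have h1 : adj.unit.app B ≫ R.map (L.map b) = b ≫ adj.unit.app (F.obj B) := by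
    simpa using (adj.unit.naturality b).symm
  have h2 : F.map (R.map f) ≫ adj.unit.app (F.obj (R.obj A')) =
      adj.unit.app (F.obj (R.obj (L.obj B))) ≫ R.map (L.map (F.map (R.map f))) := by
    simpa using adj.unit.naturality (F.map (R.map f))
  have h3 : L.map (F.map (R.map f)) ≫ θ.app (R.obj A') =
      θ.app (R.obj (L.obj B)) ≫ G.map (L.map (R.map f)) := θ.naturality (R.map f)
  have h4 : L.map (R.map f) ≫ adj.counit.app A' = adj.counit.app (L.obj B) ≫ f :=
    adj.counit.naturality f
  have h5 : F.map (adj.unit.app B) ≫ adj.unit.app (F.obj (R.obj (L.obj B))) =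
      adj.unit.app (F.obj B) ≫ R.map (L.map (F.map (adj.unit.app B))) := by
    simpa using adj.unit.naturality (F.map (adj.unit.app B))
  have h6 : L.map (F.map (adj.unit.app B)) ≫ θ.app (R.obj (L.obj B)) =
      θ.app B ≫ G.map (L.map (adj.unit.app B)) := θ.naturality (adj.unit.app B)
  have h7 : L.map (adj.unit.app B) ≫ adj.counit.app (L.obj B) = 𝟙 _ :=
    adj.left_triangle_components B
  calc adj.unit.app B ≫ R.map (L.map b) ≫ R.map (θ.app B) ≫ R.map (G.map f) ≫ R.map a'
      = b ≫ adj.unit.app (F.obj B) ≫ R.map (θ.app B) ≫ R.map (G.map f) ≫ R.map a' := by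
        rw [reassoc_of% h1]
    _ = b ≫ F.map (adj.unit.app B) ≫ F.map (R.map f) ≫
        adj.unit.app (F.obj (R.obj A')) ≫ R.map (θ.app (R.obj A')) ≫
        R.map (G.map (adj.counit.app A')) ≫ R.map a' := by
        rw [reassoc_of% h2, reassoc_of% h5]
        simp only [← R.map_comp_assoc, Category.assoc]
        rw [reassoc_of% h3, reassoc_of% h6]
        simp only [← G.map_comp, Category.assoc, h4, reassoc_of% h7]

lemma key_iff {C D : Type*} [Category C] [Category D]
    (L : C ⥤ D) (R : D ⥤ C) (adj : L ⊣ R)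
    (F : C ⥤ C) (G : D ⥤ D)
    (θ : F ⋙ L ⟶ L ⋙ G) (θb : R ⋙ F ⟶ G ⋙ R)
    (hθb : ∀ A : D, θb.app A =
      adj.unit.app (F.obj (R.obj A)) ≫ R.map (θ.app (R.obj A)) ≫
        R.map (G.map (adj.counit.app A)))
    {B : C} {A' : D} (b : B ⟶ F.obj B) (a' : G.obj A' ⟶ A') (f : L.obj B ⟶ A') :
    (f = (L.map b ≫ θ.app B) ≫ G.map f ≫ a') ↔
      ((adj.homEquiv B A') f =
        b ≫ F.map ((adj.homEquiv B A') f) ≫ (θb.app A' ≫ R.map a')) := by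
  rw [← key L R adj F G θ θb hθb b a' f]
  exact ⟨fun h => by rw [← h], fun h => (adj.homEquiv B A').injective h⟩

/-- Given a step `θ : LF ⇒ GL` over an adjunction `L ⊣ R`, with mate `θ♭`:
the lift `L̄` preserves recursive coalgebras and the lift `R̄` preserves
corecursive algebras. -/
theorem step_preserves_recursive_and_corecursive
    {C D : Type*} [Category C] [Category D]
    (L : C ⥤ D) (R : D ⥤ C) (adj : L ⊣ R)
    (F : C ⥤ C) (G : D ⥤ D)
    (θ : F ⋙ L ⟶ L ⋙ G) (θb : R ⋙ F ⟶ G ⋙ R)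
    (hθb : ∀ A : D, θb.app A =
      adj.unit.app (F.obj (R.obj A)) ≫ R.map (θ.app (R.obj A)) ≫
        R.map (G.map (adj.counit.app A))) :
    (∀ (B : C) (b : B ⟶ F.obj B),
      (∀ (A : C) (a : F.obj A ⟶ A), ∃! f : B ⟶ A, f = b ≫ F.map f ≫ a) →
      (∀ (A' : D) (a' : G.obj A' ⟶ A'),
        ∃! f : L.obj B ⟶ A', f = (L.map b ≫ θ.app B) ≫ G.map f ≫ a')) ∧
    (∀ (A : D) (a : G.obj A ⟶ A),
      (∀ (B' : D) (b' : B' ⟶ G.obj B'), ∃! f : B' ⟶ A, f = b' ≫ G.map f ≫ a) →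
      (∀ (B : C) (b : B ⟶ F.obj B),
        ∃! f : B ⟶ R.obj A, f = b ≫ F.map f ≫ (θb.app A ≫ R.map a))) := by
  constructor
  · intro B b hb A' a'
    obtain ⟨g, hg, hgu⟩ := hb (R.obj A') (θb.app A' ≫ R.map a')
    refine ⟨(adj.homEquiv B A').symm g, ?_, ?_⟩
    · show _ = _
      rw [key_iff L R adj F G θ θb hθb, Equiv.apply_symm_apply]
      exact hg
    · intro f hf
      rw [key_iff L R adj F G θ θb hθb] at hf
      have := hgu _ hf
      rw [← this, Equiv.symm_apply_apply]
  · intro A a ha B b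
    obtain ⟨g, hg, hgu⟩ := ha (L.obj B) (L.map b ≫ θ.app B)
    refine ⟨(adj.homEquiv B A) g, ?_, ?_⟩
    · show _ = _
      rw [← key_iff L R adj F G θ θb hθb]
      exact hg
    · intro f hf
      have : f = (adj.homEquiv B A) ((adj.homEquiv B A).symm f) := by
        rw [Equiv.apply_symm_apply]
      rw [this] at hf ⊢
      rw [← key_iff L R adj F G θ θb hθb] at hf
      rw [hgu _ hf]
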